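/- Let p be a real polynomial of degree k ≥ 2 and let α be a simple real root of p (p(α) = 0, p'(α) ≠ 0). Then the secant map G(x,y) = (y, (y·q(x,y) − p(y))/q(x,y)) is differentiable at the fixed point (α, α) and its total derivative there is the linear map with matrix [[0,1],[0,0]]; in particular both eigenvalues of the derivative are 0, so the fixed point (α, α) is attracting. -/

import Mathlib

open Polynomial Filter Topology

/-- The symmetric polynomial `q(x,y) = Σ_{j=1}^k a_j Σ_{i=0}^{j-1} x^i y^{j-1-i}`
associated to a real polynomial `p(x) = Σ_{j=0}^k a_j x^j`;
it satisfies `p(x) - p(y) = (x - y) * secQ p x y`. -/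
noncomputable def secQ (p : Polynomial ℝ) (x y : ℝ) : ℝ :=
  ∑ j ∈ Finset.range (p.natDegree + 1),
    p.coeff j * ∑ i ∈ Finset.range j, x ^ i * y ^ (j - 1 - i)

/-- The secant map in extended form: `G(x,y) = (y, (y·q(x,y) − p(y))/q(x,y))`. -/
noncomputable def secG (p : Polynomial ℝ) (z : ℝ × ℝ) : ℝ × ℝ :=
  (z.2, (z.2 * secQ p z.1 z.2 - Polynomial.eval z.2 p) / secQ p z.1 z.2)

lemma secQ_diag (p : Polynomial ℝ) (α : ℝ) : secQ p α α = p.derivative.eval α := by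
  rw [derivative_eval, Polynomial.sum_over_range]
  swap
  · simp
  unfold secQ
  refine Finset.sum_congr rfl fun j _ => ?_
  have : ∑ i ∈ Finset.range j, α ^ i * α ^ (j - 1 - i)
      = ∑ i ∈ Finset.range j, α ^ (j - 1) := by
    refine Finset.sum_congr rfl fun i hi => ?_
    rw [← pow_add]
    congr 1
    have := Finset.mem_range.mp hi
    omega
  rw [this, Finset.sum_const, Finset.card_range, nsmul_eq_mul]
  ring

lemma secQ_diffAt (p : Polynomial ℝ) (z : ℝ × ℝ) :
    DifferentiableAt ℝ (fun z : ℝ × ℝ => secQ p z.1 z.2) z := by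
  unfold secQ
  exact DifferentiableAt.fun_sum fun j _ => (differentiableAt_const _).fun_mul
    (DifferentiableAt.fun_sum fun i _ =>
      (differentiableAt_fst.pow i).fun_mul (differentiableAt_snd.pow _))

theorem secant_root_attracting (p : Polynomial ℝ) (hp : 2 ≤ p.natDegree) (α : ℝ)
    (hroot : p.eval α = 0) (hsimple : p.derivative.eval α ≠ 0) :
    HasFDerivAt (secG p) ((ContinuousLinearMap.snd ℝ ℝ ℝ).prod 0) (α, α) := by
  set z₀ : ℝ × ℝ := (α, α) with hz₀
  set Q : ℝ × ℝ → ℝ := fun z => secQ p z.1 z.2 with hQdef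
  have hQz₀ : Q z₀ = p.derivative.eval α := secQ_diag p α
  have hq0 : Q z₀ ≠ 0 := by rw [hQz₀]; exact hsimple
  obtain ⟨L, hQ⟩ : ∃ L, HasFDerivAt Q L z₀ :=
    ⟨_, (secQ_diffAt p z₀).hasFDerivAt⟩
  -- derivative of z ↦ (Q z)⁻¹
  have hinv : HasFDerivAt (fun z => (Q z)⁻¹) ((-(Q z₀ ^ 2)⁻¹) • L) z₀ :=
    (hasDerivAt_inv hq0).comp_hasFDerivAt z₀ hQ
  -- derivative of z ↦ p(z.2)
  have hP : HasFDerivAt (fun z : ℝ × ℝ => p.eval z.2)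
      ((p.derivative.eval α) • ContinuousLinearMap.snd ℝ ℝ ℝ) z₀ :=
    (p.hasDerivAt α).comp_hasFDerivAt (h₂ := fun x => p.eval x) (f := Prod.snd) z₀ hasFDerivAt_snd
  -- derivative of z ↦ p(z.2) * (Q z)⁻¹ : equals snd
  have hmul : HasFDerivAt (fun z : ℝ × ℝ => p.eval z.2 * (Q z)⁻¹)
      (ContinuousLinearMap.snd ℝ ℝ ℝ) z₀ := by
    have := hP.fun_mul hinv
    have h0 : p.eval z₀.2 = 0 := hroot
    rw [h0] at this
    simpa [smul_smul, inv_mul_cancel₀ hsimple, hQz₀] using this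
  -- derivative of the second component of the secant map is 0
  have h2 : HasFDerivAt (fun z : ℝ × ℝ => z.2 - p.eval z.2 * (Q z)⁻¹)
      (0 : ℝ × ℝ →L[ℝ] ℝ) z₀ := by
    simpa using (ContinuousLinearMap.snd ℝ ℝ ℝ).hasFDerivAt.fun_sub hmul
  have h1 : HasFDerivAt (fun z : ℝ × ℝ => z.2) (ContinuousLinearMap.snd ℝ ℝ ℝ) z₀ :=
    (ContinuousLinearMap.snd ℝ ℝ ℝ).hasFDerivAt
  have hF : HasFDerivAt (fun z : ℝ × ℝ => (z.2, z.2 - p.eval z.2 * (Q z)⁻¹))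
      ((ContinuousLinearMap.snd ℝ ℝ ℝ).prod 0) z₀ := h1.prodMk h2
  refine hF.congr_of_eventuallyEq ?_
  have hcont : ContinuousAt Q z₀ := (secQ_diffAt p z₀).continuousAt
  have hne : ∀ᶠ z in 𝓝 z₀, Q z ≠ 0 := hcont.eventually_ne hq0
  filter_upwards [hne] with z hz
  show (z.2, (z.2 * Q z - p.eval z.2) / Q z) = _
  have : (z.2 * Q z - p.eval z.2) / Q z = z.2 - p.eval z.2 * (Q z)⁻¹ := by
    field_simp
  rw [this]
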